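/- Let K be an algebraically closed field and 1 ≤ m ≤ n−1. The representation of SL_n(K) on ⋀^m K^n via g ↦ ⋀^m g is irreducible: the only K-subspaces U ⊆ ⋀^m K^n satisfying (⋀^m g)(U) ⊆ U for all g ∈ SL_n(K) are U = 0 and U = ⋀^m K^n. -/
import Mathlib


open Matrix Finset

/-- The set of `m`-element subsets of `Fin n`, indexing the standard basis `e_I` of `⋀^m R^n`. -/
abbrev MSub (n m : ℕ) := {s : Finset (Fin n) // s.card = m}

/-- The matrix of the `m`-th exterior power `⋀^m g` of `g` in the standard basis `e_I` of
`⋀^m R^n`: its `(I, J)` entry is the `m × m` minor of `g` with rows `I` and columns `J`. -/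
def extPow {R : Type*} [CommRing R] (n m : ℕ) (g : Matrix (Fin n) (Fin n) R) :
    Matrix (MSub n m) (MSub n m) R :=
  Matrix.of fun I J =>
    (Matrix.of fun a b : Fin m => g (I.1.orderEmbOfFin I.2 a) (J.1.orderEmbOfFin J.2 b)).det

namespace ExtAux

variable {K : Type*} [Field K] {n m : ℕ}

/-- The standard basis vector `e_I`. -/
def ee (I : MSub n m) : MSub n m → K := fun J => if J = I then 1 else 0

lemma mulVec_ee (M : Matrix (MSub n m) (MSub n m) K) (J : MSub n m) :
    M.mulVec (ee J) = fun I => M I J := by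
  funext I
  simp [Matrix.mulVec, dotProduct, ee, mul_ite]

lemma prod_orderEmbOfFin (I : MSub n m) (f : Fin n → K) :
    ∏ a : Fin m, f (I.1.orderEmbOfFin I.2 a) = ∏ i ∈ I.1, f i := by
  refine Finset.prod_bij (fun a _ => I.1.orderEmbOfFin I.2 a) ?_ ?_ ?_ ?_
  · intro a _; exact Finset.orderEmbOfFin_mem _ _ _
  · intro a _ b _ h; exact (I.1.orderEmbOfFin I.2).injective h
  · intro i hi
    have : i ∈ Set.range (I.1.orderEmbOfFin I.2) := by
      rw [Finset.range_orderEmbOfFin]; exact hi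
    obtain ⟨a, ha⟩ := this
    exact ⟨a, Finset.mem_univ a, ha⟩
  · intro a _; rfl

lemma extPow_diagonal (d : Fin n → K) :
    extPow n m (Matrix.diagonal d) =
      Matrix.diagonal (fun I : MSub n m => ∏ i ∈ I.1, d i) := by
  ext I J
  by_cases h : I = J
  · subst h
    rw [Matrix.diagonal_apply_eq]
    have hM : (Matrix.of fun a b : Fin m =>
        Matrix.diagonal d (I.1.orderEmbOfFin I.2 a) (I.1.orderEmbOfFin I.2 b)) =
        Matrix.diagonal (fun a => d (I.1.orderEmbOfFin I.2 a)) := by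
      ext a b
      by_cases hab : a = b
      · subst hab; simp
      · rw [Matrix.of_apply, Matrix.diagonal_apply_ne _
          (fun hc => hab ((I.1.orderEmbOfFin I.2).injective hc)),
          Matrix.diagonal_apply_ne _ hab]
    rw [extPow, Matrix.of_apply, hM, Matrix.det_diagonal]
    exact prod_orderEmbOfFin I d
  · have hns : ¬ J.1 ⊆ I.1 := by
      intro hsub
      exact h (Subtype.ext (Finset.eq_of_subset_of_card_le hsub
        (by rw [I.2, J.2])).symm)
    obtain ⟨j, hjJ, hjI⟩ := Finset.not_subset.mp hns
    have : j ∈ Set.range (J.1.orderEmbOfFin J.2) := by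
      rw [Finset.range_orderEmbOfFin]; exact hjJ
    obtain ⟨b0, hb0⟩ := this
    rw [Matrix.diagonal_apply_ne _ h]
    apply Matrix.det_eq_zero_of_column_eq_zero b0
    intro a
    rw [Matrix.of_apply, hb0, Matrix.diagonal_apply_ne]
    intro hc
    exact hjI (hc ▸ Finset.orderEmbOfFin_mem _ _ _)

/-- Invariance under a diagonal matrix with injective weights lets us project onto
coordinates. -/
lemma proj (w : MSub n m → K) (hw : Function.Injective w)
    (U : Submodule K (MSub n m → K))
    (hD : ∀ u ∈ U, (fun I => w I * u I) ∈ U)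
    (u : MSub n m → K) (hu : u ∈ U) (I₀ : MSub n m) :
    (fun J => if J = I₀ then u I₀ else 0) ∈ U := by
  have hpow : ∀ k : ℕ, (fun I => w I ^ k * u I) ∈ U := by
    intro k
    induction k with
    | zero => simpa using hu
    | succ k ih =>
      have h2 := hD _ ih
      have : (fun I => w I * (fun I => w I ^ k * u I) I) =
          (fun I => w I ^ (k + 1) * u I) := by
        funext I; ring
      rwa [this] at h2
  have hpoly : ∀ p : Polynomial K, (fun I => p.eval (w I) * u I) ∈ U := by
    intro p
    have hrep : (fun I => p.eval (w I) * u I) =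
        ∑ k ∈ p.support, p.coeff k • (fun I => w I ^ k * u I) := by
      funext I
      simp only [Finset.sum_apply, Pi.smul_apply, smul_eq_mul]
      rw [Polynomial.eval_eq_sum, Polynomial.sum_def, Finset.sum_mul]
      exact Finset.sum_congr rfl fun k _ => by ring
    rw [hrep]
    exact Submodule.sum_mem _ fun k _ => Submodule.smul_mem _ _ (hpow k)
  have h := hpoly (Lagrange.basis Finset.univ w I₀)
  have heq : (fun J => if J = I₀ then u I₀ else 0) =
      (fun J => (Lagrange.basis Finset.univ w I₀).eval (w J) * u J) := by
    funext J
    by_cases hJ : J = I₀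
    · subst hJ
      rw [if_pos rfl, Lagrange.eval_basis_self hw.injOn (Finset.mem_univ _), one_mul]
    · rw [if_neg hJ, Lagrange.eval_basis_of_ne (Ne.symm hJ) (Finset.mem_univ _), zero_mul]
  rwa [heq]

lemma sum_range_two_pow_lt (n : ℕ) : ∑ k ∈ Finset.range n, 2 ^ k < 2 ^ n := by
  induction n with
  | zero => simp
  | succ n ih =>
    rw [Finset.sum_range_succ, pow_succ]
    omega

/-- There is a diagonal matrix of determinant 1 whose weights on `m`-subsets are pairwise
distinct. -/
lemma exists_good [IsAlgClosed K] (hn : 1 ≤ n) :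
    ∃ d : Fin n → K, (∏ i, d i) = 1 ∧
      Function.Injective (fun I : MSub n m => ∏ i ∈ I.1, d i) := by
  -- find t with t ≠ 0 and t ^ k ≠ 1 for 1 ≤ k < 2 ^ n
  have hfin : Set.Finite (insert (0 : K)
      (⋃ k ∈ Finset.Ico 1 (2 ^ n), {x : K | x ^ k = 1})) := by
    refine Set.Finite.insert _ (Set.Finite.biUnion (Finset.finite_toSet _) ?_)
    intro k hk
    have hk1 : 0 < k := (Finset.mem_Ico.mp hk).1
    refine Set.Finite.subset
      (Polynomial.finite_setOf_isRoot (Polynomial.X_pow_sub_C_ne_zero hk1 (1 : K))) ?_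
    intro x hx
    simp only [Set.mem_setOf_eq] at hx ⊢
    simp [Polynomial.IsRoot, sub_eq_zero, hx]
  obtain ⟨t, ht⟩ := hfin.infinite_compl.nonempty
  rw [Set.mem_compl_iff] at ht
  have ht0 : t ≠ 0 := fun h => ht (h ▸ Set.mem_insert _ _)
  have htpow : ∀ k, 0 < k → k < 2 ^ n → t ^ k ≠ 1 := by
    intro k hk1 hk2 hc
    exact ht (Set.mem_insert_iff.mpr (Or.inr
      (Set.mem_biUnion (Finset.mem_Ico.mpr ⟨hk1, hk2⟩) hc)))
  -- choose c with c ^ n = (∏ t ^ 2 ^ i)⁻¹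
  have hX0 : (∏ i : Fin n, t ^ (2 ^ (i : ℕ))) ≠ 0 :=
    Finset.prod_ne_zero_iff.mpr fun i _ => pow_ne_zero _ ht0
  obtain ⟨c, hc⟩ := IsAlgClosed.exists_pow_nat_eq
    ((∏ i : Fin n, t ^ (2 ^ (i : ℕ))))⁻¹ hn
  have hc0 : c ≠ 0 := by
    intro h
    rw [h, zero_pow (by omega)] at hc
    exact inv_ne_zero hX0 hc.symm
  refine ⟨fun i => c * t ^ (2 ^ (i : ℕ)), ?_, ?_⟩
  · rw [Finset.prod_mul_distrib, Finset.prod_const, Finset.card_univ, Fintype.card_fin,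
      hc, inv_mul_cancel₀ hX0]
  · -- injectivity
    have hw : ∀ I : MSub n m, (∏ i ∈ I.1, (c * t ^ (2 ^ (i : ℕ)))) =
        c ^ m * t ^ (∑ i ∈ I.1, 2 ^ (i : ℕ)) := by
      intro I
      rw [Finset.prod_mul_distrib, Finset.prod_const, I.2, Finset.prod_pow_eq_pow_sum]
    have hSlt : ∀ I : MSub n m, (∑ i ∈ I.1, 2 ^ (i : ℕ)) < 2 ^ n := by
      intro I
      calc (∑ i ∈ I.1, 2 ^ (i : ℕ)) ≤ ∑ i : Fin n, 2 ^ (i : ℕ) :=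
            Finset.sum_le_sum_of_subset (Finset.subset_univ _)
        _ = ∑ k ∈ Finset.range n, 2 ^ k := Fin.sum_univ_eq_sum_range _ n
        _ < 2 ^ n := sum_range_two_pow_lt n
    have htinj : ∀ a b : ℕ, a < 2 ^ n → b < 2 ^ n → t ^ a = t ^ b → a = b := by
      intro a b ha hb hab
      rcases Nat.lt_trichotomy a b with h | h | h
      · exfalso
        have : t ^ a * t ^ (b - a) = t ^ a * 1 := by
          rw [← pow_add, Nat.add_sub_cancel' h.le, hab, mul_one]
        have := mul_left_cancel₀ (pow_ne_zero a ht0) this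
        exact htpow (b - a) (by omega) (by omega) this
      · exact h
      · exfalso
        have : t ^ b * t ^ (a - b) = t ^ b * 1 := by
          rw [← pow_add, Nat.add_sub_cancel' h.le, ← hab, mul_one]
        have := mul_left_cancel₀ (pow_ne_zero b ht0) this
        exact htpow (a - b) (by omega) (by omega) this
    intro I J h
    simp only [hw] at h
    have hcm : c ^ m ≠ 0 := pow_ne_zero _ hc0
    have hS : (∑ i ∈ I.1, 2 ^ (i : ℕ)) = ∑ i ∈ J.1, 2 ^ (i : ℕ) :=
      htinj _ _ (hSlt I) (hSlt J) (mul_left_cancel₀ hcm h)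
    -- conclude I = J using injectivity of binary expansions
    have hmap : (∑ k ∈ I.1.map Fin.valEmbedding, 2 ^ k) =
        ∑ k ∈ J.1.map Fin.valEmbedding, 2 ^ k := by
      rw [Finset.sum_map, Finset.sum_map]
      exact hS
    have := Finset.geomSum_injective (le_refl 2) hmap
    exact Subtype.ext (Finset.map_injective Fin.valEmbedding this)

lemma minor_ne_zero (I J : MSub n m) (i j : Fin n) (hi : i ∉ J.1) (hj : j ∈ J.1)
    (hI : I.1 = insert i (J.1.erase j)) :
    extPow n m (Matrix.transvection i j (1 : K)) I J ≠ 0 := by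
  have hij : i ≠ j := fun h => hi (h ▸ hj)
  have hiI : i ∈ I.1 := by rw [hI]; exact Finset.mem_insert_self _ _
  have hjI : j ∉ I.1 := by
    rw [hI]
    simp [Finset.mem_insert, hij.symm]
  have hsub : J.1.erase j ⊆ I.1 := by rw [hI]; exact Finset.subset_insert _ _
  set embI := I.1.orderEmbOfFin I.2 with hembI
  set embJ := J.1.orderEmbOfFin J.2 with hembJ
  have hjr : j ∈ Set.range embJ := by
    rw [hembJ, Finset.range_orderEmbOfFin]; exact hj
  obtain ⟨b0, hb0⟩ := hjr
  have hmem : ∀ b : Fin m, (if b = b0 then i else embJ b) ∈ I.1 := by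
    intro b
    by_cases hb : b = b0
    · rw [if_pos hb]; exact hiI
    · rw [if_neg hb]
      apply hsub
      refine Finset.mem_erase.mpr ⟨?_, Finset.orderEmbOfFin_mem _ _ _⟩
      intro hc
      exact hb (embJ.injective (hc.trans hb0.symm))
  set f : Fin m → Fin m := fun b => (I.1.orderIsoOfFin I.2).symm ⟨_, hmem b⟩ with hf
  have hIf : ∀ b, embI (f b) = if b = b0 then i else embJ b := by
    intro b
    have : (I.1.orderIsoOfFin I.2) (f b) = ⟨_, hmem b⟩ := by
      rw [hf]; exact (I.1.orderIsoOfFin I.2).apply_symm_apply _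
    have := congrArg Subtype.val this
    rwa [Finset.coe_orderIsoOfFin_apply] at this
  have hfinj : Function.Injective f := by
    intro b b' hbb'
    have h1 := hIf b
    have h2 := hIf b'
    rw [hbb'] at h1
    have h3 : (if b = b0 then i else embJ b) = (if b' = b0 then i else embJ b') :=
      h1.symm.trans h2
    by_cases hb : b = b0 <;> by_cases hb' : b' = b0
    · rw [hb, hb']
    · exfalso
      rw [if_pos hb, if_neg hb'] at h3
      exact hi (h3 ▸ Finset.orderEmbOfFin_mem _ _ _)
    · exfalso
      rw [if_neg hb, if_pos hb'] at h3
      exact hi (h3 ▸ Finset.orderEmbOfFin_mem _ _ _)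
    · rw [if_neg hb, if_neg hb'] at h3
      exact embJ.injective h3
  set σ : Equiv.Perm (Fin m) :=
    Equiv.ofBijective f (Finite.injective_iff_bijective.mp hfinj) with hσ
  have hentry : ∀ a b : Fin m,
      Matrix.transvection i j (1 : K) (embI a) (embJ b) =
        if a = f b then 1 else 0 := by
    intro a b
    have hexp : Matrix.transvection i j (1 : K) (embI a) (embJ b) =
        (if embI a = embJ b then 1 else 0) +
          (if i = embI a ∧ j = embJ b then 1 else 0) := by
      simp [Matrix.transvection, Matrix.single, Matrix.one_apply]
    rw [hexp]
    by_cases hb : b = b0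
    · have hJb : embJ b = j := by rw [hb, hb0]
      have hC1 : ¬ (embI a = embJ b) := by
        rw [hJb]
        exact fun hc => hjI (hc ▸ Finset.orderEmbOfFin_mem _ _ _)
      have hfb : embI (f b) = i := by rw [hIf b, if_pos hb]
      rw [if_neg hC1, zero_add]
      by_cases ha : a = f b
      · rw [if_pos ha, if_pos ⟨by rw [ha, hfb], hJb.symm⟩]
      · rw [if_neg ha, if_neg (show ¬(i = embI a ∧ j = embJ b) from
          fun h => ha (embI.injective (h.1.symm.trans hfb.symm)))]
    · have hbj : embJ b ≠ j := fun hc => hb (embJ.injective (hc.trans hb0.symm))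
      have hfb : embI (f b) = embJ b := by rw [hIf b, if_neg hb]
      rw [if_neg (show ¬(i = embI a ∧ j = embJ b) from fun h => hbj h.2.symm), add_zero]
      by_cases ha : a = f b
      · rw [if_pos ha, if_pos (by rw [ha, hfb])]
      · rw [if_neg ha, if_neg (fun hc => ha (embI.injective (hc.trans hfb.symm)))]
  have hMeq : (Matrix.of fun a b : Fin m =>
      Matrix.transvection i j (1 : K) (embI a) (embJ b)) = (σ.permMatrix K)ᵀ := by
    ext a b
    rw [Matrix.of_apply, hentry a b, Matrix.transpose_apply, Equiv.Perm.permMatrix,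
      PEquiv.toMatrix_apply, Equiv.toPEquiv_apply]
    simp only [Option.mem_some_iff]
    have hfb : σ b = f b := rfl
    rw [hfb]
    simp [eq_comm]
  rw [extPow, Matrix.of_apply]
  rw [show (Matrix.of fun a b : Fin m => Matrix.transvection i j (1 : K)
    (I.1.orderEmbOfFin I.2 a) (J.1.orderEmbOfFin J.2 b)) = (σ.permMatrix K)ᵀ from hMeq]
  rw [Matrix.det_transpose, Matrix.det_permutation]
  rcases Int.units_eq_one_or (Equiv.Perm.sign σ) with h | h <;> rw [h] <;> norm_num

end ExtAux

open ExtAux in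
/-- The representation of `SL_n(K)` on `⋀^m K^n` is irreducible for `K` algebraically
closed and `1 ≤ m ≤ n − 1`. -/
theorem exterior_power_irreducible {K : Type*} [Field K] [IsAlgClosed K] (n m : ℕ)
    (hm1 : 1 ≤ m) (hm2 : m ≤ n - 1) (U : Submodule K (MSub n m → K))
    (hU : ∀ g : Matrix (Fin n) (Fin n) K, g.det = 1 →
      ∀ u ∈ U, (extPow n m g).mulVec u ∈ U) :
    U = ⊥ ∨ U = ⊤ := by
  by_cases hbot : U = ⊥
  · exact Or.inl hbot
  right
  have hn2 : 2 ≤ n := by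
    rcases Nat.lt_or_ge n 2 with h | h
    · interval_cases n <;> omega
    · exact h
  -- good diagonal matrix
  obtain ⟨d, hd1, hdinj⟩ := exists_good (K := K) (n := n) (m := m) (by omega)
  -- projection onto coordinates
  have hkey : ∀ u ∈ U, ∀ I₀ : MSub n m,
      (fun J => if J = I₀ then u I₀ else 0) ∈ U := by
    intro u hu I₀
    refine proj _ hdinj U ?_ u hu I₀
    intro v hv
    have h := hU (Matrix.diagonal d) (by rw [Matrix.det_diagonal]; exact hd1) v hv
    rwa [extPow_diagonal, show (Matrix.diagonal fun I : MSub n m =>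
      ∏ i ∈ I.1, d i).mulVec v = fun I => (∏ i ∈ I.1, d i) * v I from
      funext fun I => Matrix.mulVec_diagonal _ _ _] at h
  -- basis vectors: swap step
  have hstep : ∀ (J : MSub n m), (ee J : MSub n m → K) ∈ U →
      ∀ i ∉ J.1, ∀ j ∈ J.1, ∀ I : MSub n m, I.1 = insert i (J.1.erase j) →
      (ee I : MSub n m → K) ∈ U := by
    intro J hJ i hi j hj I hIJ
    have hij : i ≠ j := fun h => hi (h ▸ hj)
    have hdet := Matrix.det_transvection_of_ne i j hij (1 : K)
    have hv : (extPow n m (Matrix.transvection i j (1 : K))).mulVec (ee J) ∈ U :=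
      hU _ hdet _ hJ
    rw [mulVec_ee] at hv
    have hproj := hkey _ hv I
    have hnz : extPow n m (Matrix.transvection i j (1 : K)) I J ≠ 0 :=
      minor_ne_zero I J i j hi hj hIJ
    have := U.smul_mem (extPow n m (Matrix.transvection i j (1 : K)) I J)⁻¹ hproj
    have heq : (extPow n m (Matrix.transvection i j (1 : K)) I J)⁻¹ •
        (fun J' => if J' = I then
          (fun I' => extPow n m (Matrix.transvection i j (1 : K)) I' J) I else 0) =
        (ee I : MSub n m → K) := by
      funext J'
      simp only [Pi.smul_apply, smul_eq_mul, ee]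
      by_cases h : J' = I
      · rw [if_pos h, if_pos h, inv_mul_cancel₀ hnz]
      · rw [if_neg h, if_neg h, mul_zero]
    rwa [heq] at this
  -- connectivity of the Johnson graph
  have hconn : ∀ k : ℕ, ∀ I J : MSub n m, (I.1 \ J.1).card = k →
      (ee J : MSub n m → K) ∈ U → (ee I : MSub n m → K) ∈ U := by
    intro k
    induction k with
    | zero =>
      intro I J hcard hJ
      have h1 : I.1 ⊆ J.1 := by
        rw [← Finset.sdiff_eq_empty_iff_subset]
        exact Finset.card_eq_zero.mp hcard
      have : I = J := Subtype.ext (Finset.eq_of_subset_of_card_le h1 (by rw [I.2, J.2]))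
      rwa [this]
    | succ k ih =>
      intro I J hcard hJ
      have hne : (I.1 \ J.1).Nonempty := by
        rw [← Finset.card_pos, hcard]; omega
      obtain ⟨i, hi⟩ := hne
      obtain ⟨hiI, hiJ⟩ := Finset.mem_sdiff.mp hi
      have hcards : (J.1 \ I.1).card = (I.1 \ J.1).card := by
        have h1 := Finset.card_sdiff_add_card_inter J.1 I.1
        have h2 := Finset.card_sdiff_add_card_inter I.1 J.1
        rw [Finset.inter_comm] at h1
        rw [I.2] at h2
        rw [J.2] at h1
        omega
      have hne2 : (J.1 \ I.1).Nonempty := by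
        rw [← Finset.card_pos, hcards, hcard]; omega
      obtain ⟨j, hj⟩ := hne2
      obtain ⟨hjJ, hjI⟩ := Finset.mem_sdiff.mp hj
      have hinotint : i ∉ J.1.erase j := fun h => hiJ (Finset.mem_of_mem_erase h)
      have hcardJ' : (insert i (J.1.erase j)).card = m := by
        rw [Finset.card_insert_of_notMem hinotint, Finset.card_erase_of_mem hjJ, J.2]
        omega
      set J' : MSub n m := ⟨insert i (J.1.erase j), hcardJ'⟩ with hJ'
      have hJ'mem : (ee J' : MSub n m → K) ∈ U :=
        hstep J hJ i hiJ j hjJ J' rfl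
      have hsd : I.1 \ J'.1 = (I.1 \ J.1).erase i := by
        ext x
        simp only [Finset.mem_sdiff, Finset.mem_erase, Finset.mem_insert,
          Finset.mem_erase, hJ']
        constructor
        · rintro ⟨hxI, hx⟩
          push_neg at hx
          obtain ⟨hxi, hx2⟩ := hx
          refine ⟨hxi, hxI, ?_⟩
          intro hxJ
          have hxj : x ≠ j := fun h => hjI (h ▸ hxI)
          exact hx2 hxj hxJ
        · rintro ⟨hxi, hxI, hxJ⟩
          refine ⟨hxI, ?_⟩
          push_neg
          exact ⟨hxi, fun _ => hxJ⟩
      have hcard' : (I.1 \ J'.1).card = k := by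
        rw [hsd, Finset.card_erase_of_mem hi, hcard]
        omega
      exact ih I J' hcard' hJ'mem
  -- get one basis vector
  obtain ⟨u, hu, hu0⟩ := (Submodule.ne_bot_iff U).mp hbot
  obtain ⟨I₀, hI₀⟩ : ∃ I₀, u I₀ ≠ 0 := by
    by_contra h
    push_neg at h
    exact hu0 (funext h)
  have hsI₀ := hkey u hu I₀
  have hbase : (ee I₀ : MSub n m → K) ∈ U := by
    have := U.smul_mem (u I₀)⁻¹ hsI₀
    have heq : (u I₀)⁻¹ • (fun J => if J = I₀ then u I₀ else 0) =
        (ee I₀ : MSub n m → K) := by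
      funext J
      simp only [Pi.smul_apply, smul_eq_mul, ee]
      by_cases h : J = I₀
      · rw [if_pos h, if_pos h, inv_mul_cancel₀ hI₀]
      · rw [if_neg h, if_neg h, mul_zero]
    rwa [heq] at this
  -- all basis vectors, hence everything
  rw [eq_top_iff]
  intro v _
  have hrep : v = ∑ I : MSub n m, v I • (ee I : MSub n m → K) := by
    funext J
    simp only [Finset.sum_apply, Pi.smul_apply, smul_eq_mul, ee, mul_ite, mul_one, mul_zero]
    rw [Finset.sum_ite_eq Finset.univ J v]
    simp
  rw [hrep]
  exact Submodule.sum_mem _ fun I _ =>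
    Submodule.smul_mem _ _ (hconn _ I I₀ rfl hbase)
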